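/- Let (X, T) be a topological dynamical system and μ a Borel probability measure on X. Let α be a finite Borel partition of X with cardinality M. Define h(n) = H_{ν_n}(α) where ν_n = (1/n) Σ_{i=0}^{n-1} μ ∘ T^{-i}. Then for all n ∈ ℕ, |h(n+1) − h(n)| ≤ (1/(n+1)) log(3 M² (n+1)). -/

import Mathlib

open MeasureTheory
open scoped ENNReal

/-- Shannon entropy of the (at most countable) Borel partition of `X` given by the fibers of
`P : X → ι`, with respect to the measure `μ`:  `H_μ(P) = Σ_i −μ(P⁻¹{i}) log μ(P⁻¹{i})`. -/
noncomputable def partEnt {X ι : Type*} [MeasurableSpace X] (μ : Measure X) (P : X → ι) : ℝ :=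
  ∑' i : ι, Real.negMulLog ((μ (P ⁻¹' {i})).toReal)

/-- The averaged measure `(1/n) Σ_{i=a}^{a+n-1} μ ∘ T^{-i}`. -/
noncomputable def avgMeasure {X : Type*} [MeasurableSpace X] (μ : Measure X) (T : X → X)
    (a n : ℕ) : Measure X :=
  (n : ℝ≥0∞)⁻¹ • ∑ i ∈ Finset.range n, Measure.map (T^[a + i]) μ


-- subadditivity of negMulLog
lemma negMulLog_add_le {s t : ℝ} (hs : 0 ≤ s) (ht : 0 ≤ t) :
    Real.negMulLog (s + t) ≤ Real.negMulLog s + Real.negMulLog t := by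
  have key : ∀ a b : ℝ, 0 ≤ a → 0 ≤ b → -a * Real.log (a + b) ≤ Real.negMulLog a := by
    intro a b ha hb
    rcases eq_or_lt_of_le ha with h | h
    · simp [← h]
    · have hlog : Real.log a ≤ Real.log (a + b) := Real.log_le_log h (by linarith)
      simp only [Real.negMulLog, neg_mul]
      nlinarith
  have h1 := key s t hs ht
  have h2 := key t s ht hs
  have : Real.negMulLog (s + t) = -s * Real.log (s + t) + -t * Real.log (t + s) := by
    simp only [Real.negMulLog]; rw [add_comm t s]; ring
  linarith

lemma ent_combo_ge {ι : Type*} [Fintype ι] (p q : ℝ) (hp : 0 ≤ p) (hq : 0 ≤ q) (hpq : p + q = 1)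
    (x y : ι → ℝ) (hx : ∀ i, 0 ≤ x i) (hy : ∀ i, 0 ≤ y i) :
    p * ∑ i, Real.negMulLog (x i) + q * ∑ i, Real.negMulLog (y i) ≤
      ∑ i, Real.negMulLog (p * x i + q * y i) := by
  rw [Finset.mul_sum, Finset.mul_sum, ← Finset.sum_add_distrib]
  apply Finset.sum_le_sum
  intro i _
  have := Real.concaveOn_negMulLog.2 (Set.mem_Ici.2 (hx i)) (Set.mem_Ici.2 (hy i)) hp hq hpq
  simpa [smul_eq_mul] using this

lemma ent_combo_le {ι : Type*} [Fintype ι] (p q : ℝ) (hp : 0 ≤ p) (hq : 0 ≤ q)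
    (x y : ι → ℝ) (hx : ∀ i, 0 ≤ x i) (hy : ∀ i, 0 ≤ y i) :
    ∑ i, Real.negMulLog (p * x i + q * y i) ≤
      p * ∑ i, Real.negMulLog (x i) + q * ∑ i, Real.negMulLog (y i)
        + (∑ i, x i) * Real.negMulLog p + (∑ i, y i) * Real.negMulLog q := by
  have key : ∀ i : ι, Real.negMulLog (p * x i + q * y i) ≤
      p * Real.negMulLog (x i) + q * Real.negMulLog (y i)
        + x i * Real.negMulLog p + y i * Real.negMulLog q := by
    intro i
    have h1 := negMulLog_add_le (mul_nonneg hp (hx i)) (mul_nonneg hq (hy i))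
    rw [Real.negMulLog_mul, Real.negMulLog_mul] at h1
    linarith
  calc ∑ i, Real.negMulLog (p * x i + q * y i)
      ≤ ∑ i, (p * Real.negMulLog (x i) + q * Real.negMulLog (y i)
          + x i * Real.negMulLog p + y i * Real.negMulLog q) := Finset.sum_le_sum fun i _ => key i
    _ = _ := by
        simp [Finset.sum_add_distrib, Finset.mul_sum, Finset.sum_mul]

lemma ent_le_log {M : ℕ} (hM : 0 < M) (x : Fin M → ℝ) (hx : ∀ i, 0 ≤ x i)
    (hsum : ∑ i, x i = 1) :
    ∑ i, Real.negMulLog (x i) ≤ Real.log M := by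
  have hMR : (0:ℝ) < M := by exact_mod_cast hM
  have hjensen := Real.concaveOn_negMulLog.le_map_sum (t := Finset.univ)
    (w := fun _ : Fin M => (M:ℝ)⁻¹) (p := x)
    (fun i _ => by positivity)
    (by simp [Finset.card_univ]; exact mul_inv_cancel₀ hMR.ne')
    (fun i _ => Set.mem_Ici.2 (hx i))
  simp only [smul_eq_mul, ← Finset.mul_sum, hsum, mul_one] at hjensen
  have heq : Real.negMulLog ((M:ℝ)⁻¹) = (M:ℝ)⁻¹ * Real.log M := by
    simp [Real.negMulLog, Real.log_inv]
  rw [heq] at hjensen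
  calc ∑ i, Real.negMulLog (x i) = M * ((M:ℝ)⁻¹ * ∑ i, Real.negMulLog (x i)) := by
        field_simp
    _ ≤ M * ((M:ℝ)⁻¹ * Real.log M) := by
        apply mul_le_mul_of_nonneg_left hjensen hMR.le
    _ = Real.log M := by field_simp

theorem stmt3 {X : Type*} [MetricSpace X] [CompactSpace X] [MeasurableSpace X] [BorelSpace X]
    (T : X → X) (hT : Continuous T)
    (μ : Measure X) [IsProbabilityMeasure μ]
    (M : ℕ) (P : X → Fin M) (hP : ∀ i, MeasurableSet (P ⁻¹' {i}))
    (n : ℕ) (hn : 1 ≤ n) :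
    |partEnt (avgMeasure μ T 0 (n + 1)) P - partEnt (avgMeasure μ T 0 n) P| ≤
      (1 / (n + 1 : ℝ)) * Real.log (3 * M ^ 2 * (n + 1)) := by
  classical
  have hXne : Nonempty X := by
    by_contra h
    have h0 : μ Set.univ = 0 := by
      rw [Set.univ_eq_empty_iff.mpr (not_nonempty_iff.mp h)]; simp
    rw [measure_univ] at h0
    exact one_ne_zero h0
  have hM : 0 < M := (P (Classical.arbitrary X)).pos
  have hMR : (0:ℝ) < M := by exact_mod_cast hM
  set A : Fin M → Set X := fun i => P ⁻¹' {i} with hA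
  have hTk : ∀ k : ℕ, Measurable (T^[k]) := fun k => (hT.measurable).iterate k
  have hprob : ∀ k : ℕ, IsProbabilityMeasure (μ.map (T^[k])) :=
    fun k => Measure.isProbabilityMeasure_map (hTk k).aemeasurable
  have havg : ∀ (m : ℕ) (s : Set X), avgMeasure μ T 0 m s
      = (m : ℝ≥0∞)⁻¹ * ∑ k ∈ Finset.range m, μ.map (T^[k]) s := by
    intro m s
    simp [avgMeasure, Measure.smul_apply, Measure.finset_sum_apply, smul_eq_mul]
  have hprobavg : ∀ m : ℕ, 0 < m → IsProbabilityMeasure (avgMeasure μ T 0 m) := by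
    intro m hm
    constructor
    rw [havg]
    have h1 : ∀ k ∈ Finset.range m, μ.map (T^[k]) Set.univ = 1 := fun k _ => measure_univ
    rw [Finset.sum_congr rfl h1, Finset.sum_const, Finset.card_range, nsmul_eq_mul, mul_one]
    exact ENNReal.inv_mul_cancel (by exact_mod_cast hm.ne') (ENNReal.natCast_ne_top m)
  have hdisj : Pairwise (Function.onFun Disjoint A) := by
    intro i j hij
    apply Set.disjoint_left.mpr
    intro a hai haj
    exact hij ((Set.mem_singleton_iff.mp hai) ▸ (Set.mem_singleton_iff.mp haj) ▸ rfl)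
  have hcover : ⋃ i, A i = Set.univ := by
    apply Set.eq_univ_iff_forall.mpr
    intro a
    exact Set.mem_iUnion.2 ⟨P a, rfl⟩
  have hsum1 : ∀ (ν : Measure X), IsProbabilityMeasure ν → ∑ i, (ν (A i)).toReal = 1 := by
    intro ν hν
    rw [← ENNReal.toReal_sum (fun i _ => measure_ne_top _ _), ← tsum_fintype (L := SummationFilter.unconditional _),
      ← measure_iUnion hdisj hP, hcover, measure_univ, ENNReal.toReal_one]
  have hpe : ∀ ν : Measure X, partEnt ν P = ∑ i, Real.negMulLog ((ν (A i)).toReal) :=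
    fun ν => tsum_fintype _
  -- real-valued quantities
  set r : Fin M → ℕ → ℝ := fun i k => (μ.map (T^[k]) (A i)).toReal with hr
  have hxf : ∀ (m : ℕ) (i : Fin M), (avgMeasure μ T 0 m (A i)).toReal
      = (m:ℝ)⁻¹ * ∑ k ∈ Finset.range m, r i k := by
    intro m i
    rw [havg, ENNReal.toReal_mul, ENNReal.toReal_inv, ENNReal.toReal_natCast,
      ENNReal.toReal_sum (fun k _ => measure_ne_top _ _)]
  set x : Fin M → ℝ := fun i => (avgMeasure μ T 0 n (A i)).toReal with hxd
  set z : Fin M → ℝ := fun i => (avgMeasure μ T 0 (n+1) (A i)).toReal with hzd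
  set y : Fin M → ℝ := fun i => r i n with hyd
  have hnR : (0:ℝ) < n := by exact_mod_cast hn
  set p : ℝ := 1 / ((n:ℝ) + 1) with hpdef
  set q : ℝ := (n:ℝ) / ((n:ℝ) + 1) with hqdef
  have hp0 : 0 < p := by rw [hpdef]; positivity
  have hq0 : 0 ≤ q := by rw [hqdef]; positivity
  have hpq : q + p = 1 := by rw [hpdef, hqdef]; field_simp
  have hcomb : ∀ i, z i = q * x i + p * y i := by
    intro i
    have h1 : z i = ((n:ℝ)+1)⁻¹ * (∑ k ∈ Finset.range n, r i k + r i n) := by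
      rw [hzd]
      simp only
      rw [hxf (n+1) i, Finset.sum_range_succ]
      push_cast
      ring
    have h2 : x i = (n:ℝ)⁻¹ * ∑ k ∈ Finset.range n, r i k := hxf n i
    rw [h1, h2, hpdef, hqdef, hyd]
    field_simp
  -- instances
  have hinx : IsProbabilityMeasure (avgMeasure μ T 0 n) := hprobavg n hn
  have hinz : IsProbabilityMeasure (avgMeasure μ T 0 (n+1)) := hprobavg (n+1) (Nat.succ_pos n)
  have hxsum : ∑ i, x i = 1 := hsum1 _ hinx
  have hysum : ∑ i, y i = 1 := hsum1 _ (hprob n)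
  have hx0 : ∀ i, 0 ≤ x i := fun i => ENNReal.toReal_nonneg
  have hy0 : ∀ i, 0 ≤ y i := fun i => ENNReal.toReal_nonneg
  have hx1 : ∀ i, x i ≤ 1 := fun i => by
    rw [hxd]; exact ENNReal.toReal_le_of_le_ofReal one_pos.le (by simpa using prob_le_one)
  have hy1 : ∀ i, y i ≤ 1 := fun i => by
    rw [hyd]; exact ENNReal.toReal_le_of_le_ofReal one_pos.le (by simpa using prob_le_one)
  set Hx : ℝ := ∑ i, Real.negMulLog (x i) with hHx
  set Hy : ℝ := ∑ i, Real.negMulLog (y i) with hHy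
  set Hz : ℝ := ∑ i, Real.negMulLog (z i) with hHz
  have hHx0 : 0 ≤ Hx := Finset.sum_nonneg fun i _ => Real.negMulLog_nonneg (hx0 i) (hx1 i)
  have hHy0 : 0 ≤ Hy := Finset.sum_nonneg fun i _ => Real.negMulLog_nonneg (hy0 i) (hy1 i)
  have hHxM : Hx ≤ Real.log M := ent_le_log hM x hx0 hxsum
  have hHyM : Hy ≤ Real.log M := ent_le_log hM y hy0 hysum
  have hzc : Hz = ∑ i, Real.negMulLog (q * x i + p * y i) :=
    Finset.sum_congr rfl fun i _ => by rw [hcomb i]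
  have f1 : q * Hx + p * Hy ≤ Hz := by
    rw [hzc]; exact ent_combo_ge q p hq0 hp0.le hpq x y hx0 hy0
  have f2 : Hz ≤ q * Hx + p * Hy + Real.negMulLog q + Real.negMulLog p := by
    rw [hzc]
    have := ent_combo_le q p hq0 hp0.le x y hx0 hy0
    rw [hxsum, hysum, one_mul, one_mul] at this
    linarith
  -- log arithmetic
  have hlog3 : 1 ≤ Real.log 3 := by
    rw [Real.le_log_iff_exp_le (by norm_num)]
    exact (Real.exp_one_lt_d9.le.trans (by norm_num))
  have hlogM : 0 ≤ Real.log M := Real.log_nonneg (by exact_mod_cast hM)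
  have hlogn : 0 ≤ Real.log ((n:ℝ)+1) := Real.log_nonneg (by linarith)
  have f7 : Real.negMulLog p = p * Real.log ((n:ℝ)+1) := by
    rw [Real.negMulLog, hpdef, one_div, Real.log_inv]; ring
  have f8 : Real.negMulLog q ≤ p * Real.log 3 := by
    have h1 : Real.negMulLog q = q * Real.log (((n:ℝ)+1)/n) := by
      have hlq : Real.log q = - Real.log (((n:ℝ)+1)/n) := by
        rw [hqdef, ← Real.log_inv, inv_div]
      rw [Real.negMulLog, hlq]; ring
    have h2 : Real.log (((n:ℝ)+1)/n) ≤ ((n:ℝ)+1)/n - 1 :=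
      Real.log_le_sub_one_of_pos (by positivity)
    have h3 : ((n:ℝ)+1)/n - 1 = 1/n := by field_simp; ring
    have h4 : Real.negMulLog q ≤ q * (1/n) := by
      rw [h1]; exact mul_le_mul_of_nonneg_left (h2.trans_eq h3) hq0
    have h5 : q * (1/n) = p := by rw [hpdef, hqdef]; field_simp
    have h6 : p ≤ p * Real.log 3 := le_mul_of_one_le_right hp0.le hlog3
    linarith
  have hL : Real.log (3 * (M:ℝ) ^ 2 * ((n:ℝ) + 1)) =
      Real.log 3 + 2 * Real.log M + Real.log ((n:ℝ)+1) := by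
    rw [Real.log_mul (by positivity) (by positivity), Real.log_mul (by positivity) (by positivity),
      Real.log_pow]
    push_cast
    ring
  have hrw1 : partEnt (avgMeasure μ T 0 (n+1)) P = Hz := hpe _
  have hrw2 : partEnt (avgMeasure μ T 0 n) P = Hx := hpe _
  rw [hrw1, hrw2]
  clear_value x z y r Hx Hy Hz
  have hq1p : q = 1 - p := by linarith
  have hqx : q * Hx = Hx - p * Hx := by rw [hq1p]; ring
  have hpHy0 : 0 ≤ p * Hy := mul_nonneg hp0.le hHy0
  have hpHx0 : 0 ≤ p * Hx := mul_nonneg hp0.le hHx0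
  have hpHxM : p * Hx ≤ p * Real.log M := mul_le_mul_of_nonneg_left hHxM hp0.le
  have hpHyM : p * Hy ≤ p * Real.log M := mul_le_mul_of_nonneg_left hHyM hp0.le
  have hplogM : 0 ≤ p * Real.log M := mul_nonneg hp0.le hlogM
  have hplogn : 0 ≤ p * Real.log ((n:ℝ)+1) := mul_nonneg hp0.le hlogn
  have hplog3 : p * 1 ≤ p * Real.log 3 := mul_le_mul_of_nonneg_left hlog3 hp0.le
  have hgoal : |Hz - Hx| ≤ p * Real.log (3 * (M:ℝ) ^ 2 * ((n:ℝ) + 1)) := by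
    rw [hL, abs_le]
    have hexp : p * (Real.log 3 + 2 * Real.log M + Real.log ((n:ℝ)+1))
        = p * Real.log 3 + 2 * (p * Real.log M) + p * Real.log ((n:ℝ)+1) := by ring
    constructor
    · rw [hexp] at *
      linarith
    · rw [hexp] at *
      linarith
  calc |Hz - Hx| ≤ p * Real.log (3 * (M:ℝ) ^ 2 * ((n:ℝ) + 1)) := hgoal
    _ = (1 / (n + 1 : ℝ)) * Real.log (3 * M ^ 2 * (n + 1)) := by rw [hpdef]
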